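/- Let K be a field and X a type. Then the free associative algebra FreeAlgebra K X is anticommutative: (1) for every two-sided ideal I of FreeAlgebra K X with I ≠ ⊥ there exist x, y ∈ I with x * y ≠ 0, and (2) for all two-sided ideals I, J of FreeAlgebra K X with I ≠ ⊥ and J ≠ ⊥, I ⊓ J ≠ ⊥. -/
import Mathlib

theorem freeAlgebra_anticommutative
    (K : Type*) (X : Type*) [Field K] :
    (∀ I : TwoSidedIdeal (FreeAlgebra K X), I ≠ ⊥ → ∃ x ∈ I, ∃ y ∈ I, x * y ≠ 0) ∧
    (∀ I J : TwoSidedIdeal (FreeAlgebra K X), I ≠ ⊥ → J ≠ ⊥ → I ⊓ J ≠ ⊥) := by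
  have key : ∀ I : TwoSidedIdeal (FreeAlgebra K X), I ≠ ⊥ → ∃ x ∈ I, x ≠ 0 := by
    intro I hI
    by_contra h
    push_neg at h
    apply hI
    ext x
    simp only [TwoSidedIdeal.mem_bot]
    exact ⟨fun hx => h x hx, fun hx => hx ▸ I.zero_mem⟩
  constructor
  · intro I hI
    obtain ⟨x, hxI, hx⟩ := key I hI
    exact ⟨x, hxI, x, hxI, mul_ne_zero hx hx⟩
  · intro I J hI hJ
    obtain ⟨x, hxI, hx⟩ := key I hI
    obtain ⟨y, hyJ, hy⟩ := key J hJ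
    intro h
    have hmem : x * y ∈ I ⊓ J :=
      ⟨I.mul_mem_right _ _ hxI, J.mul_mem_left _ _ hyJ⟩
    rw [h, TwoSidedIdeal.mem_bot] at hmem
    exact mul_ne_zero hx hy hmem
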